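/- In the formal power series ring ℚ[[s, q, t]], the identity ∏_{m=1}^∞ (1 + s^m q^m t^{2m−1})^2 / ((1 − s^m q^{m−1} t^{2m−2})(1 − s^m q^{m+1} t^{2m})) = ∑_{n=0}^∞ s^n ∑_{ν = 1^{a_1}⋯n^{a_n} ⊢ n} q^{n − l(ν)} t^{2n − 2l(ν)} ∏_{i=1}^n ( ∑_{r+u_1+u_2+v = a_i, u_1,u_2 ∈ {0,1}} q^{u_1+u_2+2v} t^{2u_1+2u_2+2v - (u_1+u_2)} ) holds, where l(ν) = ∑ a_i and in the inner sum r, v are nonnegative integers while u_1, u_2 ∈ {0,1} (the two odd directions contribute exterior powers). -/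

import Mathlib

open MvPowerSeries

/-- The variables `s`, `q`, `t` of `ℚ[[s,q,t]]`. -/
noncomputable abbrev PSs : MvPowerSeries (Fin 3) ℚ := MvPowerSeries.X 0
noncomputable abbrev PSq : MvPowerSeries (Fin 3) ℚ := MvPowerSeries.X 1
noncomputable abbrev PSt : MvPowerSeries (Fin 3) ℚ := MvPowerSeries.X 2

/-- The factor of the infinite product for index `m ≥ 1` in the `Ã₀` case:
`(1 + s^m q^m t^{2m−1})^2 / ((1 − s^m q^{m−1} t^{2m−2})(1 − s^m q^{m+1} t^{2m}))`. -/
noncomputable def prodFactorA (m : ℕ) : MvPowerSeries (Fin 3) ℚ :=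
  (1 + PSs ^ m * PSq ^ m * PSt ^ (2 * m - 1)) ^ 2
    * (1 - PSs ^ m * PSq ^ (m - 1) * PSt ^ (2 * m - 2))⁻¹
    * (1 - PSs ^ m * PSq ^ (m + 1) * PSt ^ (2 * m))⁻¹

/-- The coefficient of `s^n` on the right-hand side: the sum over partitions
`ν = 1^{a_1} ⋯ n^{a_n}` of `n` of `q^{n−l(ν)} t^{2n−2l(ν)}` times
`∏_i ∑_{r+u₁+u₂+v=a_i, u₁,u₂ ∈ {0,1}} q^{u₁+u₂+2v} t^{2u₁+2u₂+2v−(u₁+u₂)}`. -/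
noncomputable def partitionSumA (n : ℕ) : MvPowerSeries (Fin 3) ℚ :=
  ∑ ν : Nat.Partition n,
    PSq ^ (n - ν.parts.card) * PSt ^ (2 * n - 2 * ν.parts.card) *
      ∏ i ∈ Finset.Icc 1 n,
        ∑ x ∈ (Finset.Nat.antidiagonalTuple 4 (Multiset.count i ν.parts)).filter
            (fun x => x 1 ≤ 1 ∧ x 2 ≤ 1),
          PSq ^ (x 1 + x 2 + 2 * x 3)
            * PSt ^ (2 * x 1 + 2 * x 2 + 2 * x 3 - (x 1 + x 2))

namespace PPGS
open Finset

abbrev PS := MvPowerSeries (Fin 3) ℚ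

noncomputable def expv (a b c : ℕ) : Fin 3 →₀ ℕ :=
  Finsupp.single 0 a + Finsupp.single 1 b + Finsupp.single 2 c

@[simp] lemma expv_apply0 (a b c : ℕ) : expv a b c 0 = a := by
  simp [expv, Finsupp.single_apply]

@[simp] lemma expv_apply1 (a b c : ℕ) : expv a b c 1 = b := by
  simp [expv, Finsupp.single_apply]

@[simp] lemma expv_apply2 (a b c : ℕ) : expv a b c 2 = c := by
  simp [expv, Finsupp.single_apply]

lemma expv_add (a b c a' b' c' : ℕ) :
    expv (a + a') (b + b') (c + c') = expv a b c + expv a' b' c' := by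
  simp only [expv, Finsupp.single_add]
  abel

noncomputable def mono (a b c : ℕ) : PS := monomial (expv a b c) 1

lemma mono_congr {a b c a' b' c' : ℕ} (h1 : a = a') (h2 : b = b') (h3 : c = c') :
    mono a b c = mono a' b' c' := by subst h1 h2 h3; rfl

lemma mono_mul (a b c a' b' c' : ℕ) :
    mono a b c * mono a' b' c' = mono (a + a') (b + b') (c + c') := by
  simp [mono, monomial_mul_monomial, expv_add]

lemma mono_pow (a b c k : ℕ) : mono a b c ^ k = mono (k * a) (k * b) (k * c) := by
  induction k with
  | zero => simp [mono, expv]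
  | succ k ih => rw [pow_succ, ih, mono_mul]; exact mono_congr (by ring) (by ring) (by ring)

lemma sqt_eq (a b c : ℕ) : PSs ^ a * PSq ^ b * PSt ^ c = mono a b c := by
  rw [X_pow_eq, X_pow_eq, X_pow_eq, monomial_mul_monomial, monomial_mul_monomial]
  simp [mono, expv]

lemma qt_eq (b c : ℕ) : PSq ^ b * PSt ^ c = mono 0 b c := by
  have := sqt_eq 0 b c
  rwa [pow_zero, one_mul] at this

lemma coeff_mono (e : Fin 3 →₀ ℕ) (a b c : ℕ) :
    coeff e (mono a b c) = if e = expv a b c then 1 else 0 := by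
  classical
  rw [mono, coeff_monomial]

lemma coeff_mono_of_ne {e : Fin 3 →₀ ℕ} {a : ℕ} (b c : ℕ) (h : e 0 ≠ a) :
    coeff e (mono a b c) = 0 := by
  rw [coeff_mono, if_neg]
  intro he
  exact h (by rw [he]; simp)


def EqB (n : ℕ) (X Y : PS) : Prop :=
  ∀ e : Fin 3 →₀ ℕ, e 0 ≤ n → MvPowerSeries.coeff e X = MvPowerSeries.coeff e Y

lemma EqB.refl {n : ℕ} (X : PS) : EqB n X X := fun _ _ => rfl

lemma EqB.trans {n : ℕ} {X Y Z : PS} (h : EqB n X Y) (h' : EqB n Y Z) : EqB n X Z :=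
  fun e he => (h e he).trans (h' e he)

lemma EqB.mul {n : ℕ} {X Y X' Y' : PS} (h : EqB n X X') (h' : EqB n Y Y') :
    EqB n (X * Y) (X' * Y') := by
  intro e he
  classical
  rw [coeff_mul, coeff_mul]
  refine Finset.sum_congr rfl fun p hp => ?_
  have hmem := Finset.HasAntidiagonal.mem_antidiagonal.mp hp
  have h0 : p.1 0 + p.2 0 = e 0 := by
    rw [← hmem]; simp
  rw [h p.1 (by omega), h' p.2 (by omega)]

lemma EqB.prod {n : ℕ} {ι : Type*} {s : Finset ι} {f g : ι → PS}
    (h : ∀ i ∈ s, EqB n (f i) (g i)) : EqB n (∏ i ∈ s, f i) (∏ i ∈ s, g i) := by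
  classical
  induction s using Finset.cons_induction with
  | empty => simpa using EqB.refl 1
  | cons a s ha ih =>
    rw [Finset.prod_cons, Finset.prod_cons]
    exact (h a (Finset.mem_cons_self a s)).mul (ih fun i hi => h i (Finset.mem_cons_of_mem hi))



lemma coeff_mono_mul (e : Fin 3 →₀ ℕ) (a b c : ℕ) (φ : PS) :
    coeff e (mono a b c * φ) =
      if expv a b c ≤ e then coeff (e - expv a b c) φ else 0 := by
  rw [mono, coeff_monomial_mul]
  split_ifs <;> simp

lemma coeff_mono_mul_of_s_ne {e : Fin 3 →₀ ℕ} {a : ℕ} (b c : ℕ) (φ : PS)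
    (hφ : ∀ f : Fin 3 →₀ ℕ, f 0 ≠ 0 → coeff f φ = 0) (h : a ≠ e 0) :
    coeff e (mono a b c * φ) = 0 := by
  rw [coeff_mono_mul]
  split_ifs with hle
  · apply hφ
    have := Finsupp.le_def.mp hle 0
    rw [expv_apply0] at this
    have h2 : (e - expv a b c) 0 = e 0 - a := by simp [Finsupp.tsub_apply]
    omega
  · rfl

lemma geom_eqb {a : ℕ} (b c : ℕ) (ha : 0 < a) (n : ℕ) :
    EqB n ((1 - mono a b c)⁻¹) (∑ r ∈ range (n + 1), mono a b c ^ r) := by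
  set B := mono a b c with hB
  have hc : constantCoeff (1 - B) ≠ 0 := by
    rw [map_sub, map_one, ← coeff_zero_eq_constantCoeff_apply,
      coeff_mono_of_ne b c (by simpa using ha.ne)]
    simp
  have hinv : (1 - B) * (1 - B)⁻¹ = 1 := MvPowerSeries.mul_inv_cancel _ hc
  have hg : (∑ r ∈ range (n + 1), B ^ r) * (1 - B) = 1 - B ^ (n + 1) := by
    have h := geom_sum_mul B (n + 1)
    linear_combination -h
  have key : (1 - B)⁻¹ = (∑ r ∈ range (n + 1), B ^ r) + B ^ (n + 1) * (1 - B)⁻¹ := by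
    have h2 : (∑ r ∈ range (n + 1), B ^ r) * ((1 - B) * (1 - B)⁻¹)
        = (1 - B ^ (n + 1)) * (1 - B)⁻¹ := by rw [← mul_assoc, hg]
    rw [hinv, mul_one] at h2
    linear_combination -h2
  intro e he
  rw [key, map_add]
  have hz : coeff e (B ^ (n + 1) * (1 - B)⁻¹) = 0 := by
    rw [hB, mono_pow, coeff_mono_mul, if_neg]
    intro hle
    have := Finsupp.le_def.mp hle 0
    rw [expv_apply0] at this
    nlinarith
  rw [hz, add_zero]


noncomputable def inner (j : ℕ) : PS :=
  ∑ x ∈ (Finset.Nat.antidiagonalTuple 4 j).filter (fun x => x 1 ≤ 1 ∧ x 2 ≤ 1),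
    mono 0 (x 1 + x 2 + 2 * x 3) (2 * x 1 + 2 * x 2 + 2 * x 3 - (x 1 + x 2))

noncomputable def Um (m j : ℕ) : PS := mono ((m + 1) * j) (m * j) (2 * (m * j)) * inner j

lemma Um_eq (m j : ℕ) : Um m j =
    ∑ x ∈ (Finset.Nat.antidiagonalTuple 4 j).filter (fun x => x 1 ≤ 1 ∧ x 2 ≤ 1),
      mono ((m + 1) * j) (m * j + (x 1 + x 2 + 2 * x 3))
        (2 * (m * j) + (2 * x 1 + 2 * x 2 + 2 * x 3 - (x 1 + x 2))) := by
  rw [Um, inner, Finset.mul_sum]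
  exact Finset.sum_congr rfl fun x _ => by rw [mono_mul, add_zero]

lemma prodFactorA_eq (m : ℕ) :
    prodFactorA (m + 1) = (1 + mono (m + 1) (m + 1) (2 * m + 1)) ^ 2
      * (1 - mono (m + 1) m (2 * m))⁻¹ * (1 - mono (m + 1) (m + 2) (2 * m + 2))⁻¹ := by
  have e1 : 2 * (m + 1) - 1 = 2 * m + 1 := by omega
  have e2 : (m + 1) - 1 = m := by omega
  have e3 : 2 * (m + 1) - 2 = 2 * m := by omega
  have e4 : (m + 1) + 1 = m + 2 := by omega
  have e5 : 2 * (m + 1) = 2 * m + 2 := by omega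
  rw [prodFactorA, e1, e2, e3, e4, e5, sqt_eq, sqt_eq, sqt_eq]

lemma expand_four {N : ℕ} (W X Y Z : ℕ → PS) :
    (∑ u1 ∈ range 2, W u1) * (∑ u2 ∈ range 2, X u2) * (∑ r ∈ range N, Y r)
        * (∑ v ∈ range N, Z v)
      = ∑ v ∈ range N, ∑ r ∈ range N, ∑ u2 ∈ range 2, ∑ u1 ∈ range 2,
          W u1 * X u2 * Y r * Z v := by
  simp only [Finset.sum_mul, Finset.mul_sum]

lemma quad_expand (m N : ℕ) :
    (1 + mono (m + 1) (m + 1) (2 * m + 1)) ^ 2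
        * (∑ r ∈ range N, mono (m + 1) m (2 * m) ^ r)
        * (∑ v ∈ range N, mono (m + 1) (m + 2) (2 * m + 2) ^ v)
      = ∑ v ∈ range N, ∑ r ∈ range N, ∑ u2 ∈ range 2, ∑ u1 ∈ range 2,
          mono ((m + 1) * (u1 + u2 + r + v)) (m * (u1 + u2 + r + v) + (u1 + u2 + 2 * v))
            (2 * (m * (u1 + u2 + r + v)) + (u1 + u2 + 2 * v)) := by
  have h1 : (1 + mono (m + 1) (m + 1) (2 * m + 1))
      = ∑ u ∈ range 2, mono (m + 1) (m + 1) (2 * m + 1) ^ u := by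
    rw [Finset.sum_range_succ, Finset.sum_range_one, pow_zero, pow_one]
  rw [sq, h1, expand_four]
  refine Finset.sum_congr rfl fun v _ => Finset.sum_congr rfl fun r _ =>
    Finset.sum_congr rfl fun u2 _ => Finset.sum_congr rfl fun u1 _ => ?_
  rw [mono_pow, mono_pow, mono_pow, mono_pow, mono_mul, mono_mul, mono_mul]
  exact mono_congr (by ring) (by ring) (by ring)

lemma quad_eqb (m n : ℕ) :
    EqB n (∑ v ∈ range (n + 1), ∑ r ∈ range (n + 1), ∑ u2 ∈ range 2, ∑ u1 ∈ range 2,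
          mono ((m + 1) * (u1 + u2 + r + v)) (m * (u1 + u2 + r + v) + (u1 + u2 + 2 * v))
            (2 * (m * (u1 + u2 + r + v)) + (u1 + u2 + 2 * v)))
      (∑ j ∈ range (n + 1), Um m j) := by
  intro e he
  simp only [Um_eq, map_sum]
  rw [← Finset.sum_product', ← Finset.sum_product', ← Finset.sum_product',
    Finset.sum_sigma']
  set Q := ((range (n + 1) ×ˢ range (n + 1)) ×ˢ range 2) ×ˢ range 2 with hQ
  have hvan : ∀ y ∈ Q, (fun y : ((ℕ × ℕ) × ℕ) × ℕ => coeff e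
      (mono ((m + 1) * (y.2 + y.1.2 + y.1.1.2 + y.1.1.1))
        (m * (y.2 + y.1.2 + y.1.1.2 + y.1.1.1) + (y.2 + y.1.2 + 2 * y.1.1.1))
        (2 * (m * (y.2 + y.1.2 + y.1.1.2 + y.1.1.1)) + (y.2 + y.1.2 + 2 * y.1.1.1)))) y ≠ 0
      → y.2 + y.1.2 + y.1.1.2 + y.1.1.1 ≤ n := by
    intro y _ hy
    by_contra hgt
    apply hy
    apply coeff_mono_of_ne
    have hj : y.2 + y.1.2 + y.1.1.2 + y.1.1.1
        ≤ (m + 1) * (y.2 + y.1.2 + y.1.1.2 + y.1.1.1) :=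
      Nat.le_mul_of_pos_left _ (Nat.succ_pos m)
    omega
  rw [← Finset.sum_filter_of_ne hvan]
  refine Finset.sum_bij' (i := fun y _ => (⟨y.2 + y.1.2 + y.1.1.2 + y.1.1.1,
      ![y.1.1.2, y.2, y.1.2, y.1.1.1]⟩ : (_ : ℕ) × (Fin 4 → ℕ)))
    (j := fun z _ => (((z.2 3, z.2 0), z.2 2), z.2 1)) ?_ ?_ ?_ ?_ ?_
  · intro y hy
    simp only [Finset.mem_filter, hQ, Finset.mem_product, Finset.mem_range] at hy
    simp only [Finset.mem_sigma, Finset.mem_range, Finset.mem_filter,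
      Finset.Nat.mem_antidiagonalTuple]
    refine ⟨by omega, ⟨by rw [Fin.sum_univ_four]; simp; omega, by simp; omega⟩⟩
  · intro z hz
    simp only [Finset.mem_sigma, Finset.mem_range, Finset.mem_filter,
      Finset.Nat.mem_antidiagonalTuple] at hz
    obtain ⟨hj, hsum, hu1, hu2⟩ := hz
    rw [Fin.sum_univ_four] at hsum
    have h0 : z.2 0 ≤ z.1 := by omega
    have h3 : z.2 3 ≤ z.1 := by omega
    simp only [Finset.mem_filter, hQ, Finset.mem_product, Finset.mem_range]
    exact ⟨⟨⟨⟨by omega, by omega⟩, by omega⟩, by omega⟩, by omega⟩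
  · intro y hy
    simp
  · intro z hz
    simp only [Finset.mem_sigma, Finset.mem_range, Finset.mem_filter,
      Finset.Nat.mem_antidiagonalTuple] at hz
    obtain ⟨hj, hsum, hu1, hu2⟩ := hz
    rw [Fin.sum_univ_four] at hsum
    refine Sigma.ext (by simp; omega) (heq_of_eq ?_)
    funext i; fin_cases i <;> simp
  · intro y hy
    apply congrArg
    exact mono_congr (by simp) (by simp) (by simp; omega)

lemma factor_eqb (m n : ℕ) :
    EqB n (prodFactorA (m + 1)) (∑ j ∈ range (n + 1), Um m j) := by
  rw [prodFactorA_eq]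
  refine EqB.trans (EqB.mul (EqB.mul (EqB.refl _) (geom_eqb m (2 * m) (Nat.succ_pos m) n))
    (geom_eqb (m + 2) (2 * m + 2) (Nat.succ_pos m) n)) ?_
  rw [quad_expand]
  exact quad_eqb m n



def QT (X : PS) : Prop := ∀ e : Fin 3 →₀ ℕ, e 0 ≠ 0 → coeff e X = 0

lemma QT_inner (j : ℕ) : QT (inner j) := by
  intro e he
  rw [inner, map_sum]
  exact Finset.sum_eq_zero fun x _ => coeff_mono_of_ne _ _ he

lemma QT_prod {ι : Type*} {s : Finset ι} {f : ι → PS} (h : ∀ i ∈ s, QT (f i)) :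
    QT (∏ i ∈ s, f i) := by
  classical
  induction s using Finset.cons_induction with
  | empty =>
    intro e he
    rw [Finset.prod_empty, coeff_one, if_neg]
    intro h0
    rw [h0] at he
    simp at he
  | cons a s ha ih =>
    intro e he
    rw [Finset.prod_cons, coeff_mul]
    refine Finset.sum_eq_zero fun p hp => ?_
    have hmem := Finset.HasAntidiagonal.mem_antidiagonal.mp hp
    have h0 : p.1 0 + p.2 0 = e 0 := by rw [← hmem]; simp
    rcases Nat.eq_zero_or_pos (p.1 0) with h1 | h1
    · rw [ih (fun i hi => h i (Finset.mem_cons_of_mem hi)) p.2 (by omega), mul_zero]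
    · rw [h a (Finset.mem_cons_self _ _) p.1 (by omega), zero_mul]

lemma prod_mono {ι : Type*} (s : Finset ι) (f g h : ι → ℕ) :
    ∏ i ∈ s, mono (f i) (g i) (h i)
      = mono (∑ i ∈ s, f i) (∑ i ∈ s, g i) (∑ i ∈ s, h i) := by
  classical
  induction s using Finset.cons_induction with
  | empty => simp [mono, expv]
  | cons a s ha ih =>
    rw [Finset.prod_cons, Finset.sum_cons, Finset.sum_cons, Finset.sum_cons, ih, mono_mul]

lemma prod_Um {n : ℕ} (p : Fin n → ℕ) :
    ∏ i : Fin n, Um (i : ℕ) (p i)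
      = mono (∑ i : Fin n, ((i : ℕ) + 1) * p i) (∑ i : Fin n, (i : ℕ) * p i)
          (∑ i : Fin n, 2 * ((i : ℕ) * p i)) * ∏ i : Fin n, inner (p i) := by
  simp only [Um]
  rw [Finset.prod_mul_distrib, prod_mono]

@[to_additive sum_Icc_one]
lemma prod_Icc_one {M : Type*} [CommMonoid M] (n : ℕ) (f : ℕ → M) :
    ∏ i ∈ Finset.Icc 1 n, f i = ∏ i : Fin n, f ((i : ℕ) + 1) := by
  induction n with
  | zero => simp
  | succ n ih =>
    rw [Finset.prod_Icc_succ_top (by omega), ih, Fin.prod_univ_castSucc]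
    simp

-- partition facts
lemma parts_le {n : ℕ} (ν : Nat.Partition n) {i : ℕ} (hi : i ∈ ν.parts) : i ≤ n := by
  have := Multiset.le_sum_of_mem hi
  rwa [ν.parts_sum] at this

lemma card_le {n : ℕ} (ν : Nat.Partition n) : ν.parts.card ≤ n := by
  have h := Multiset.card_nsmul_le_sum (s := ν.parts) (a := 1) fun x hx => ν.parts_pos hx
  rw [ν.parts_sum, smul_eq_mul, mul_one] at h
  exact h

lemma count_le {n : ℕ} (ν : Nat.Partition n) (i : ℕ) : Multiset.count i ν.parts ≤ n :=
  le_trans (Multiset.count_le_card _ _) (card_le ν)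

lemma sum_toFinset_to_Icc {n : ℕ} (ν : Nat.Partition n) (g : ℕ → ℕ → ℕ)
    (hg : ∀ i, g i 0 = 0) :
    ∑ i ∈ Finset.Icc 1 n, g i (Multiset.count i ν.parts)
      = ∑ a ∈ ν.parts.toFinset, g a (Multiset.count a ν.parts) := by
  refine (Finset.sum_subset ?_ ?_).symm
  · intro a ha
    rw [Multiset.mem_toFinset] at ha
    exact Finset.mem_Icc.mpr ⟨ν.parts_pos ha, parts_le ν ha⟩
  · intro i _ hi
    rw [Multiset.mem_toFinset] at hi
    rw [Multiset.count_eq_zero_of_notMem hi, hg]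

lemma sum_count_fin {n : ℕ} (ν : Nat.Partition n) :
    ∑ i : Fin n, Multiset.count ((i : ℕ) + 1) ν.parts = ν.parts.card := by
  rw [← sum_Icc_one n (fun i => Multiset.count i ν.parts),
    sum_toFinset_to_Icc ν (fun _ c => c) (fun _ => rfl),
    Multiset.toFinset_sum_count_eq]

lemma sum_count_mul_fin {n : ℕ} (ν : Nat.Partition n) :
    ∑ i : Fin n, ((i : ℕ) + 1) * Multiset.count ((i : ℕ) + 1) ν.parts = n := by
  rw [← sum_Icc_one n (fun i => i * Multiset.count i ν.parts),
    sum_toFinset_to_Icc ν (fun i c => i * c) (fun i => by simp)]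
  have : ∑ a ∈ ν.parts.toFinset, a * Multiset.count a ν.parts
      = ∑ a ∈ ν.parts.toFinset, Multiset.count a ν.parts • a :=
    Finset.sum_congr rfl fun a _ => by rw [smul_eq_mul, mul_comm]
  rw [this, ← Finset.sum_multiset_map_count, Multiset.map_id', ν.parts_sum]

-- building a partition from a tuple
lemma count_repl_sum {n : ℕ} (p : Fin n → ℕ) (k : Fin n) :
    Multiset.count ((k : ℕ) + 1) (∑ i : Fin n, Multiset.replicate (p i) ((i : ℕ) + 1))
      = p k := by
  rw [Multiset.count_sum', Finset.sum_eq_single k]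
  · rw [Multiset.count_replicate, if_pos rfl]
  · intro i _ hik
    rw [Multiset.count_replicate, if_neg]
    intro h
    exact hik (Fin.ext (by omega))
  · simp

def toPart {n : ℕ} (p : Fin n → ℕ) (hp : ∑ i : Fin n, ((i : ℕ) + 1) * p i = n) :
    Nat.Partition n where
  parts := ∑ i : Fin n, Multiset.replicate (p i) ((i : ℕ) + 1)
  parts_pos := by
    intro a ha
    rw [Multiset.mem_sum] at ha
    obtain ⟨i, _, hi⟩ := ha
    rw [Multiset.eq_of_mem_replicate hi]
    omega
  parts_sum := by
    have h1 : ∀ s : Finset (Fin n),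
        (∑ i ∈ s, Multiset.replicate (p i) ((i : ℕ) + 1)).sum
          = ∑ i ∈ s, ((i : ℕ) + 1) * p i := by
      intro s
      induction s using Finset.cons_induction with
      | empty => simp
      | cons a s ha ih =>
        rw [Finset.sum_cons, Finset.sum_cons, Multiset.sum_add, ih,
          Multiset.sum_replicate, smul_eq_mul, mul_comm]
    rw [h1, hp]

lemma toPart_count {n : ℕ} (p : Fin n → ℕ) (hp : ∑ i : Fin n, ((i : ℕ) + 1) * p i = n)
    (k : Fin n) : Multiset.count ((k : ℕ) + 1) (toPart p hp).parts = p k :=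
  count_repl_sum p k

lemma toPart_ofCounts {n : ℕ} (ν : Nat.Partition n)
    (hp : ∑ i : Fin n, ((i : ℕ) + 1) * Multiset.count ((i : ℕ) + 1) ν.parts = n) :
    toPart (fun i => Multiset.count ((i : ℕ) + 1) ν.parts) hp = ν := by
  ext1
  ext j
  rcases Nat.eq_zero_or_pos j with hj | hj
  · subst hj
    rw [Multiset.count_eq_zero_of_notMem, Multiset.count_eq_zero_of_notMem]
    · intro hmem; exact absurd (ν.parts_pos hmem) (by omega)
    · intro hmem
      exact absurd ((toPart _ hp).parts_pos hmem) (by omega)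
  · rcases le_or_gt j n with hjn | hjn
    · have hk : j - 1 < n := by omega
      have := toPart_count (fun i => Multiset.count ((i : ℕ) + 1) ν.parts) hp ⟨j - 1, hk⟩
      simpa [Nat.sub_add_cancel hj] using this
    · rw [Multiset.count_eq_zero_of_notMem, Multiset.count_eq_zero_of_notMem]
      · intro hmem; exact absurd (parts_le ν hmem) (by omega)
      · intro hmem
        exact absurd (parts_le (toPart _ hp) hmem) (by omega)



lemma term_eq {n : ℕ} (ν : Nat.Partition n) :
    PSs ^ n * (PSq ^ (n - ν.parts.card) * PSt ^ (2 * n - 2 * ν.parts.card) *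
      ∏ i ∈ Finset.Icc 1 n,
        ∑ x ∈ (Finset.Nat.antidiagonalTuple 4 (Multiset.count i ν.parts)).filter
            (fun x => x 1 ≤ 1 ∧ x 2 ≤ 1),
          PSq ^ (x 1 + x 2 + 2 * x 3)
            * PSt ^ (2 * x 1 + 2 * x 2 + 2 * x 3 - (x 1 + x 2)))
      = ∏ i : Fin n, Um (i : ℕ) (Multiset.count ((i : ℕ) + 1) ν.parts) := by
  have hinner : ∀ j : ℕ,
      (∑ x ∈ (Finset.Nat.antidiagonalTuple 4 j).filter (fun x => x 1 ≤ 1 ∧ x 2 ≤ 1),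
        PSq ^ (x 1 + x 2 + 2 * x 3) * PSt ^ (2 * x 1 + 2 * x 2 + 2 * x 3 - (x 1 + x 2)))
      = inner j := by
    intro j
    rw [inner]
    exact Finset.sum_congr rfl fun x _ => qt_eq _ _
  simp only [hinner]
  rw [prod_Icc_one n (fun i => inner (Multiset.count i ν.parts))]
  rw [prod_Um (fun i : Fin n => Multiset.count ((i : ℕ) + 1) ν.parts)]
  have h1 := sum_count_mul_fin ν
  have h2 := sum_count_fin ν
  have hle : ν.parts.card ≤ n := by
    have h5 : ∑ i : Fin n, Multiset.count ((i : ℕ) + 1) ν.parts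
        ≤ ∑ i : Fin n, ((i : ℕ) + 1) * Multiset.count ((i : ℕ) + 1) ν.parts :=
      Finset.sum_le_sum fun i _ => Nat.le_mul_of_pos_left _ (Nat.succ_pos _)
    omega
  have h3 : ∑ i : Fin n, (i : ℕ) * Multiset.count ((i : ℕ) + 1) ν.parts
      = n - ν.parts.card := by
    have : ∑ i : Fin n, ((i : ℕ) + 1) * Multiset.count ((i : ℕ) + 1) ν.parts
        = (∑ i : Fin n, (i : ℕ) * Multiset.count ((i : ℕ) + 1) ν.parts) + ν.parts.card := by
      rw [← h2, ← Finset.sum_add_distrib]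
      exact Finset.sum_congr rfl fun i _ => by ring
    omega
  have h4 : ∑ i : Fin n, 2 * ((i : ℕ) * Multiset.count ((i : ℕ) + 1) ν.parts)
      = 2 * n - 2 * ν.parts.card := by
    rw [← Finset.mul_sum, h3]
    omega
  rw [h1, h3, h4]
  rw [show PSs ^ n * (PSq ^ (n - ν.parts.card) * PSt ^ (2 * n - 2 * ν.parts.card) *
      ∏ i : Fin n, inner (Multiset.count ((i : ℕ) + 1) ν.parts))
    = (PSs ^ n * PSq ^ (n - ν.parts.card) * PSt ^ (2 * n - 2 * ν.parts.card)) *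
      ∏ i : Fin n, inner (Multiset.count ((i : ℕ) + 1) ν.parts) from by ring, sqt_eq]


end PPGS

open Finset PPGS in
/-- In `ℚ[[s,q,t]]`, the identity
`∏_{m≥1} (1 + s^m q^m t^{2m−1})^2/((1 − s^m q^{m−1} t^{2m−2})(1 − s^m q^{m+1} t^{2m}))
 = ∑_{n≥0} s^n ∑_{ν ⊢ n} q^{n−l(ν)} t^{2n−2l(ν)}
     ∏_{i=1}^n ∑_{r+u₁+u₂+v=a_i, u₁,u₂∈{0,1}} q^{u₁+u₂+2v} t^{2u₁+2u₂+2v−(u₁+u₂)}`,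
stated coefficientwise: for every monomial of `s`-degree `n`, the coefficient
of the (stabilized) partial product `∏_{m=1}^n` equals the coefficient of the
term `s^n · (partition sum)` of the right-hand side. -/
theorem perverse_poincare_generating_series_A0 :
    ∀ (n : ℕ) (d : Fin 3 →₀ ℕ), d 0 = n →
      MvPowerSeries.coeff d (∏ m ∈ Finset.range n, prodFactorA (m + 1))
        = MvPowerSeries.coeff d (PSs ^ n * partitionSumA n) := by
  intro n d hd
  classical
  have h1 : coeff d (∏ m ∈ range n, prodFactorA (m + 1))
      = coeff d (∏ m ∈ range n, ∑ j ∈ range (n + 1), Um m j) :=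
    (EqB.prod fun m _ => factor_eqb m n) d (le_of_eq hd)
  rw [h1, ← Fin.prod_univ_eq_prod_range (fun m => ∑ j ∈ range (n + 1), Um m j) n,
    Finset.prod_univ_sum, map_sum]
  have hvan : ∀ p ∈ Fintype.piFinset (fun _ : Fin n => range (n + 1)),
      (fun p : Fin n → ℕ => coeff d (∏ i : Fin n, Um (i : ℕ) (p i))) p ≠ 0
        → ∑ i : Fin n, ((i : ℕ) + 1) * p i = n := by
    intro p _ hp
    by_contra hne
    apply hp
    show coeff d (∏ i : Fin n, Um (i : ℕ) (p i)) = 0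
    rw [prod_Um]
    exact coeff_mono_mul_of_s_ne _ _ _ (QT_prod fun i _ => QT_inner _) (by omega)
  rw [← Finset.sum_filter_of_ne hvan]
  rw [partitionSumA, Finset.mul_sum, map_sum]
  rw [Finset.sum_congr rfl fun (ν : Nat.Partition n) _ => by rw [term_eq ν]]
  refine Finset.sum_bij'
    (i := fun p hp => toPart p (Finset.mem_filter.mp hp).2)
    (j := fun ν _ => fun i : Fin n => Multiset.count ((i : ℕ) + 1) ν.parts)
    ?_ ?_ ?_ ?_ ?_
  · intro p hp
    exact Finset.mem_univ _
  · intro ν _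
    refine Finset.mem_filter.mpr ⟨Fintype.mem_piFinset.mpr fun i => ?_, sum_count_mul_fin ν⟩
    rw [Finset.mem_range]
    exact Nat.lt_succ_of_le (count_le ν _)
  · intro p hp
    funext k
    exact toPart_count p (Finset.mem_filter.mp hp).2 k
  · intro ν _
    exact toPart_ofCounts ν (sum_count_mul_fin ν)
  · intro p hp
    refine congrArg _ (Finset.prod_congr rfl fun i _ => ?_)
    rw [toPart_count p (Finset.mem_filter.mp hp).2 i]
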